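/- Let X = (x_{ij}) and Y = (y_{ij}) be two a×b matrices of independent indeterminates over a field K, and let I be the ideal of K[x_{ij}, y_{ij}] generated by the 2×2 minors of the a×2b matrix [X Y] together with the 2×2 minors of the b×2a matrix [Xᵀ Yᵀ]. Then I equals the toric (Hibi) ideal of the distributive lattice [2]×[a]×[b], i.e., I is the kernel of the K-algebra map sending x_{ij} ↦ u_1 v_i w_j and y_{ij} ↦ u_2 v_i w_j into K[u_1,u_2,v_1,...,v_a,w_1,...,w_b]. -/

import Mathlib

open MvPolynomial

/-- The set of `2 × 2` minors of the `a × 2b` concatenated matrix `[X Y]`,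
whose entry in row `i` and column `(s, j)` is the variable `x_{s,i,j}`. -/
def minors2 (K : Type*) [CommRing K] (a b : ℕ) :
    Set (MvPolynomial (Fin 2 × Fin a × Fin b) K) :=
  {d | ∃ (i₁ i₂ : Fin a) (c₁ c₂ : Fin 2 × Fin b),
    d = X (c₁.1, i₁, c₁.2) * X (c₂.1, i₂, c₂.2)
      - X (c₂.1, i₁, c₂.2) * X (c₁.1, i₂, c₁.2)}

/-- The set of `2 × 2` minors of the `b × 2a` concatenated matrix `[Xᵀ Yᵀ]`,
whose entry in row `j` and column `(s, i)` is the variable `x_{s,i,j}`. -/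
def minors3 (K : Type*) [CommRing K] (a b : ℕ) :
    Set (MvPolynomial (Fin 2 × Fin a × Fin b) K) :=
  {d | ∃ (j₁ j₂ : Fin b) (c₁ c₂ : Fin 2 × Fin a),
    d = X (c₁.1, c₁.2, j₁) * X (c₂.1, c₂.2, j₂)
      - X (c₂.1, c₂.2, j₁) * X (c₁.1, c₁.2, j₂)}

namespace Stmt13Aux

/-- Index type of the variables. -/
abbrev V (a b : ℕ) := Fin 2 × Fin a × Fin b

/-- Index type of the target variables. -/
abbrev W (a b : ℕ) := Fin 2 ⊕ Fin a ⊕ Fin b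

variable {a b : ℕ}

def f1 : V a b → Fin 2 := Prod.fst
def f2 : V a b → Fin a := Prod.fst ∘ Prod.snd
def f3 : V a b → Fin b := Prod.snd ∘ Prod.snd

lemma f1_def : (f1 : V a b → Fin 2) = Prod.fst := rfl
lemma f2_def : (f2 : V a b → Fin a) = Prod.fst ∘ Prod.snd := rfl
lemma f3_def : (f3 : V a b → Fin b) = Prod.snd ∘ Prod.snd := rfl

@[simp] lemma f1_apply (s : Fin 2) (i : Fin a) (j : Fin b) : f1 (s, i, j) = s := rfl
@[simp] lemma f2_apply (s : Fin 2) (i : Fin a) (j : Fin b) : f2 (s, i, j) = i := rfl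
@[simp] lemma f3_apply (s : Fin 2) (i : Fin a) (j : Fin b) : f3 (s, i, j) = j := rfl

/-- a missing multiset lemma -/
lemma filterMap_none {α β : Type*} (s : Multiset α) :
    s.filterMap (fun _ => (none : Option β)) = 0 := by
  induction s using Multiset.induction with
  | empty => rfl
  | cons a s ih => rw [Multiset.filterMap_cons_none _ _ rfl]; exact ih

/-- a missing multiset lemma -/
lemma filterMap_add {α β : Type*} (f : α → Option β) (s t : Multiset α) :
    (s + t).filterMap f = s.filterMap f + t.filterMap f := by
  induction s using Multiset.induction with
  | empty => simp
  | cons a s ih =>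
    rcases h : f a with _ | c
    · rw [Multiset.cons_add, Multiset.filterMap_cons_none _ _ h,
        Multiset.filterMap_cons_none _ _ h, ih]
    · rw [Multiset.cons_add, Multiset.filterMap_cons_some _ _ _ h,
        Multiset.filterMap_cons_some _ _ _ h, ih, Multiset.cons_add]

/-- The canonical (sorted) list attached to a monomial. -/
def canonL (m : Multiset (V a b)) : List (V a b) :=
  (Multiset.sort (m.map f1) (· ≤ ·)).zip
    ((Multiset.sort (m.map f2) (· ≤ ·)).zip (Multiset.sort (m.map f3) (· ≤ ·)))

/-- The canonical (sorted) monomial with the same multidegree data. -/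
def canon (m : Multiset (V a b)) : Multiset (V a b) := (canonL m : Multiset (V a b))

lemma length1 (m : Multiset (V a b)) :
    (Multiset.sort (m.map f1) (· ≤ ·)).length = Multiset.card m := by
  rw [Multiset.length_sort, Multiset.card_map]

lemma length2 (m : Multiset (V a b)) :
    (Multiset.sort (m.map f2) (· ≤ ·)).length = Multiset.card m := by
  rw [Multiset.length_sort, Multiset.card_map]

lemma length3 (m : Multiset (V a b)) :
    (Multiset.sort (m.map f3) (· ≤ ·)).length = Multiset.card m := by
  rw [Multiset.length_sort, Multiset.card_map]

lemma length23 (m : Multiset (V a b)) :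
    ((Multiset.sort (m.map f2) (· ≤ ·)).zip (Multiset.sort (m.map f3) (· ≤ ·))).length
      = Multiset.card m := by
  rw [List.length_zip, length2, length3, min_self]

lemma canon_map_f1 (m : Multiset (V a b)) : (canon m).map f1 = m.map f1 := by
  rw [canon, canonL, Multiset.map_coe, f1_def,
    List.map_fst_zip (by simp [List.length_zip]), Multiset.sort_eq]

lemma canon_map_f2 (m : Multiset (V a b)) : (canon m).map f2 = m.map f2 := by
  rw [canon, canonL, Multiset.map_coe, f2_def, ← List.map_map,
    List.map_snd_zip (by simp [List.length_zip]),
    List.map_fst_zip (by simp [List.length_zip]), Multiset.sort_eq]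

lemma canon_map_f3 (m : Multiset (V a b)) : (canon m).map f3 = m.map f3 := by
  rw [canon, canonL, Multiset.map_coe, f3_def, ← List.map_map,
    List.map_snd_zip (by simp [List.length_zip]),
    List.map_snd_zip (by simp [List.length_zip]), Multiset.sort_eq]

/-- The image multiset of exponents under the monomial map. -/
def mW (m : Multiset (V a b)) : Multiset (W a b) :=
  m.map (fun v => Sum.inl (f1 v)) + m.map (fun v => Sum.inr (Sum.inl (f2 v)))
    + m.map (fun v => Sum.inr (Sum.inr (f3 v)))

def g1 : W a b → Option (Fin 2) := Sum.getLeft?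
def g2 : W a b → Option (Fin a) := fun w => w.getRight?.bind Sum.getLeft?
def g3 : W a b → Option (Fin b) := fun w => w.getRight?.bind Sum.getRight?

lemma filterMap_g1 (m : Multiset (V a b)) : (mW m).filterMap g1 = m.map f1 := by
  rw [mW, filterMap_add, filterMap_add, Multiset.filterMap_map, Multiset.filterMap_map,
    Multiset.filterMap_map]
  have h1 : (g1 ∘ fun v : V a b => (Sum.inl (f1 v) : W a b)) = some ∘ f1 := rfl
  have h2 : (g1 ∘ fun v : V a b => (Sum.inr (Sum.inl (f2 v)) : W a b)) = fun _ => none := rfl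
  have h3 : (g1 ∘ fun v : V a b => (Sum.inr (Sum.inr (f3 v)) : W a b)) = fun _ => none := rfl
  rw [h1, h2, h3, Multiset.filterMap_eq_map]
  simp [filterMap_none]

lemma filterMap_g2 (m : Multiset (V a b)) : (mW m).filterMap g2 = m.map f2 := by
  rw [mW, filterMap_add, filterMap_add, Multiset.filterMap_map, Multiset.filterMap_map,
    Multiset.filterMap_map]
  have h1 : (g2 ∘ fun v : V a b => (Sum.inl (f1 v) : W a b)) = fun _ => none := rfl
  have h2 : (g2 ∘ fun v : V a b => (Sum.inr (Sum.inl (f2 v)) : W a b)) = some ∘ f2 := rfl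
  have h3 : (g2 ∘ fun v : V a b => (Sum.inr (Sum.inr (f3 v)) : W a b)) = fun _ => none := rfl
  rw [h1, h2, h3, Multiset.filterMap_eq_map]
  simp [filterMap_none]

lemma filterMap_g3 (m : Multiset (V a b)) : (mW m).filterMap g3 = m.map f3 := by
  rw [mW, filterMap_add, filterMap_add, Multiset.filterMap_map, Multiset.filterMap_map,
    Multiset.filterMap_map]
  have h1 : (g3 ∘ fun v : V a b => (Sum.inl (f1 v) : W a b)) = fun _ => none := rfl
  have h2 : (g3 ∘ fun v : V a b => (Sum.inr (Sum.inl (f2 v)) : W a b)) = fun _ => none := rfl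
  have h3 : (g3 ∘ fun v : V a b => (Sum.inr (Sum.inr (f3 v)) : W a b)) = some ∘ f3 := rfl
  rw [h1, h2, h3, Multiset.filterMap_eq_map]
  simp [filterMap_none]

/-- The canonical monomial attached to a target multiset of exponents. -/
def canonW (n : Multiset (W a b)) : Multiset (V a b) :=
  ((Multiset.sort (n.filterMap g1) (· ≤ ·)).zip
    ((Multiset.sort (n.filterMap g2) (· ≤ ·)).zip
      (Multiset.sort (n.filterMap g3) (· ≤ ·))) : List (V a b))

lemma canonW_mW (m : Multiset (V a b)) : canonW (mW m) = canon m := by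
  rw [canonW, canon, canonL, filterMap_g1, filterMap_g2, filterMap_g3]

/-- The retraction on exponents. -/
noncomputable def rho (ee : W a b →₀ ℕ) : V a b →₀ ℕ := (canonW ee.toMultiset).toFinsupp

lemma rho_spec (m : Multiset (V a b)) :
    rho (mW m).toFinsupp = (canon m).toFinsupp := by
  rw [rho, Multiset.toFinsupp_toMultiset, canonW_mW]

section Poly

variable (K : Type*) [CommRing K]

/-- The monomial attached to a multiset. -/
noncomputable def P (m : Multiset (V a b)) : MvPolynomial (V a b) K := (m.map X).prod

lemma prod_map_X {σ : Type*} [DecidableEq σ] (n : Multiset σ) :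
    (n.map (X : σ → MvPolynomial σ K)).prod = monomial n.toFinsupp 1 := by
  induction n using Multiset.induction with
  | empty =>
    simp [Multiset.toFinsupp_zero]
  | cons v n ih =>
    have hX : (X v : MvPolynomial σ K) = monomial (Finsupp.single v 1) 1 := rfl
    rw [Multiset.map_cons, Multiset.prod_cons, ih, hX, monomial_mul, one_mul,
      ← Multiset.singleton_add, Multiset.toFinsupp_add, Multiset.toFinsupp_singleton]

lemma P_eq_monomial (m : Multiset (V a b)) : P K m = monomial m.toFinsupp 1 :=
  prod_map_X K m

lemma monomial_eq_P (d : V a b →₀ ℕ) (c : K) :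
    monomial d c = C c * P K d.toMultiset := by
  rw [P_eq_monomial, Finsupp.toMultiset_toFinsupp, C_mul_monomial, mul_one]

/-- The ideal generated by the minors. -/
noncomputable def I : Ideal (MvPolynomial (V a b) K) := Ideal.span (minors2 K a b ∪ minors3 K a b)

/-- Congruence of monomials modulo the ideal of minors. -/
def Rel (m m' : Multiset (V a b)) : Prop := P K m - P K m' ∈ I K

variable {K}

lemma Rel.refl (m : Multiset (V a b)) : Rel K m m := by
  rw [Rel, sub_self]; exact zero_mem _

lemma Rel.trans {m m' m'' : Multiset (V a b)} (h1 : Rel K m m') (h2 : Rel K m' m'') :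
    Rel K m m'' := by
  have := add_mem h1 h2
  rwa [sub_add_sub_cancel] at this

lemma Rel.cons {m m' : Multiset (V a b)} (v : V a b) (h : Rel K m m') :
    Rel K (v ::ₘ m) (v ::ₘ m') := by
  rw [Rel, P, P, Multiset.map_cons, Multiset.map_cons, Multiset.prod_cons,
    Multiset.prod_cons, ← mul_sub]
  exact Ideal.mul_mem_left _ _ h

lemma rel_swap_i (s t : Fin 2) (i k : Fin a) (j l : Fin b) (r : Multiset (V a b)) :
    Rel K ((s, i, j) ::ₘ (t, k, l) ::ₘ r) ((s, k, j) ::ₘ (t, i, l) ::ₘ r) := by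
  have hg : (X (s, i, j) * X (t, k, l) - X (t, i, l) * X (s, k, j) :
      MvPolynomial (V a b) K) ∈ minors2 K a b := ⟨i, k, (s, j), (t, l), rfl⟩
  have hd : P K ((s, i, j) ::ₘ (t, k, l) ::ₘ r) - P K ((s, k, j) ::ₘ (t, i, l) ::ₘ r)
      = (X (s, i, j) * X (t, k, l) - X (t, i, l) * X (s, k, j)) * P K r := by
    simp only [P, Multiset.map_cons, Multiset.prod_cons]; ring
  rw [Rel, hd]
  exact Ideal.mul_mem_right _ _ (Ideal.subset_span (Or.inl hg))

lemma rel_swap_j (s t : Fin 2) (i k : Fin a) (j l : Fin b) (r : Multiset (V a b)) :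
    Rel K ((s, i, j) ::ₘ (t, k, l) ::ₘ r) ((s, i, l) ::ₘ (t, k, j) ::ₘ r) := by
  have hg : (X (s, i, j) * X (t, k, l) - X (t, k, j) * X (s, i, l) :
      MvPolynomial (V a b) K) ∈ minors3 K a b := ⟨j, l, (s, i), (t, k), rfl⟩
  have hd : P K ((s, i, j) ::ₘ (t, k, l) ::ₘ r) - P K ((s, i, l) ::ₘ (t, k, j) ::ₘ r)
      = (X (s, i, j) * X (t, k, l) - X (t, k, j) * X (s, i, l)) * P K r := by
    simp only [P, Multiset.map_cons, Multiset.prod_cons]; ring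
  rw [Rel, hd]
  exact Ideal.mul_mem_right _ _ (Ideal.subset_span (Or.inr hg))

lemma gather1 (m : Multiset (V a b)) (s : Fin 2) (i : Fin a)
    (hs : s ∈ m.map f1) (hi : i ∈ m.map f2) :
    ∃ (j₁ : Fin b) (m₁ : Multiset (V a b)), Rel K m ((s, i, j₁) ::ₘ m₁) ∧
      ((s, i, j₁) ::ₘ m₁).map f1 = m.map f1 ∧
      ((s, i, j₁) ::ₘ m₁).map f2 = m.map f2 ∧
      ((s, i, j₁) ::ₘ m₁).map f3 = m.map f3 := by
  obtain ⟨p, hp, hps⟩ := Multiset.mem_map.1 hs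
  obtain ⟨s', i', j'⟩ := p
  simp only [f1_apply] at hps
  subst hps
  obtain ⟨m₁, rfl⟩ := Multiset.exists_cons_of_mem hp
  by_cases h : i' = i
  · subst h
    exact ⟨j', m₁, Rel.refl _, rfl, rfl, rfl⟩
  · have hi' : i ∈ m₁.map f2 := by
      simp only [Multiset.map_cons, Multiset.mem_cons, f2_apply] at hi
      exact hi.resolve_left (fun hh => h hh.symm)
    obtain ⟨q, hq, hqi⟩ := Multiset.mem_map.1 hi'
    obtain ⟨t, i'', j₂⟩ := q
    simp only [f2_apply] at hqi
    subst hqi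
    obtain ⟨m₂, rfl⟩ := Multiset.exists_cons_of_mem hq
    refine ⟨j', (t, i', j₂) ::ₘ m₂, rel_swap_i s' t i' i'' j' j₂ m₂, ?_, ?_, ?_⟩
    · simp [Multiset.map_cons]
    · simp only [Multiset.map_cons, f2_apply]
      rw [Multiset.cons_swap]
    · simp [Multiset.map_cons]

lemma gather2 (m₁ : Multiset (V a b)) (s : Fin 2) (i : Fin a) (j j₁ : Fin b)
    (hj : j ∈ ((s, i, j₁) ::ₘ m₁).map f3) :
    ∃ m₀ : Multiset (V a b), Rel K ((s, i, j₁) ::ₘ m₁) ((s, i, j) ::ₘ m₀) ∧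
      ((s, i, j) ::ₘ m₀).map f1 = ((s, i, j₁) ::ₘ m₁).map f1 ∧
      ((s, i, j) ::ₘ m₀).map f2 = ((s, i, j₁) ::ₘ m₁).map f2 ∧
      ((s, i, j) ::ₘ m₀).map f3 = ((s, i, j₁) ::ₘ m₁).map f3 := by
  by_cases h : j₁ = j
  · subst h
    exact ⟨m₁, Rel.refl _, rfl, rfl, rfl⟩
  · have hj' : j ∈ m₁.map f3 := by
      simp only [Multiset.map_cons, Multiset.mem_cons, f3_apply] at hj
      exact hj.resolve_left (fun hh => h hh.symm)
    obtain ⟨q, hq, hqj⟩ := Multiset.mem_map.1 hj'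
    obtain ⟨t, k, j''⟩ := q
    simp only [f3_apply] at hqj
    subst hqj
    obtain ⟨m₂, rfl⟩ := Multiset.exists_cons_of_mem hq
    refine ⟨(t, k, j₁) ::ₘ m₂, rel_swap_j s t i k j₁ j'' m₂, ?_, ?_, ?_⟩
    · simp [Multiset.map_cons]
    · simp [Multiset.map_cons]
    · simp only [Multiset.map_cons, f3_apply]
      rw [Multiset.cons_swap]

lemma gather (m : Multiset (V a b)) (s : Fin 2) (i : Fin a) (j : Fin b)
    (hs : s ∈ m.map f1) (hi : i ∈ m.map f2) (hj : j ∈ m.map f3) :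
    ∃ m₀ : Multiset (V a b), Rel K m ((s, i, j) ::ₘ m₀) ∧
      ((s, i, j) ::ₘ m₀).map f1 = m.map f1 ∧
      ((s, i, j) ::ₘ m₀).map f2 = m.map f2 ∧
      ((s, i, j) ::ₘ m₀).map f3 = m.map f3 := by
  obtain ⟨j₁, m₁, h1, e1, e2, e3⟩ := gather1 (K := K) m s i hs hi
  obtain ⟨m₀, h2, d1, d2, d3⟩ := gather2 (K := K) m₁ s i j j₁ (by rw [e3]; exact hj)
  exact ⟨m₀, h1.trans h2, d1.trans e1, d2.trans e2, d3.trans e3⟩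

lemma rel_of_data : ∀ (n : ℕ) (m m' : Multiset (V a b)), Multiset.card m' = n →
    m.map f1 = m'.map f1 → m.map f2 = m'.map f2 → m.map f3 = m'.map f3 →
    Rel K m m' := by
  intro n
  induction n with
  | zero =>
    intro m m' hc h1 _ _
    rw [Multiset.card_eq_zero] at hc
    subst hc
    rw [Multiset.map_zero, Multiset.map_eq_zero] at h1
    subst h1
    exact Rel.refl _
  | succ n ih =>
    intro m m' hc h1 h2 h3
    have hne : m' ≠ 0 := by
      intro h; rw [h] at hc; simp at hc
    obtain ⟨v, hv⟩ := Multiset.exists_mem_of_ne_zero hne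
    obtain ⟨s, i, j⟩ := v
    obtain ⟨m'', rfl⟩ := Multiset.exists_cons_of_mem hv
    have hs : s ∈ m.map f1 := by rw [h1]; simp
    have hi : i ∈ m.map f2 := by rw [h2]; simp
    have hj : j ∈ m.map f3 := by rw [h3]; simp
    obtain ⟨m₀, hrel, e1, e2, e3⟩ := gather (K := K) m s i j hs hi hj
    have c1 : m₀.map f1 = m''.map f1 := by
      have := e1.trans h1
      simp only [Multiset.map_cons] at this
      exact (Multiset.cons_inj_right _).1 this
    have c2 : m₀.map f2 = m''.map f2 := by
      have := e2.trans h2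
      simp only [Multiset.map_cons] at this
      exact (Multiset.cons_inj_right _).1 this
    have c3 : m₀.map f3 = m''.map f3 := by
      have := e3.trans h3
      simp only [Multiset.map_cons] at this
      exact (Multiset.cons_inj_right _).1 this
    have hcard : Multiset.card m'' = n := by
      rw [Multiset.card_cons] at hc
      omega
    exact hrel.trans (Rel.cons _ (ih m₀ m'' hcard c1 c2 c3))

lemma rel_canon (m : Multiset (V a b)) : Rel K m (canon m) :=
  rel_of_data (Multiset.card (canon m)) m (canon m) rfl
    (canon_map_f1 m).symm (canon_map_f2 m).symm (canon_map_f3 m).symm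

end Poly


section Aeval

variable (K : Type*) [CommRing K] {a b : ℕ}

/-- The monomial map. -/
noncomputable def phi : V a b → MvPolynomial (W a b) K := fun p =>
  X (Sum.inl p.1) * X (Sum.inr (Sum.inl p.2.1)) * X (Sum.inr (Sum.inr p.2.2))

lemma A_P (m : Multiset (V a b)) :
    aeval (phi K) (P K m) = monomial (mW m).toFinsupp 1 := by
  rw [P, map_multiset_prod, Multiset.map_map]
  have h : ((aeval (phi K)) ∘ (X : V a b → MvPolynomial (V a b) K)) = phi K := by
    funext v; simp [aeval_X]
  rw [h]
  have h2 : (m.map (phi K)).prod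
      = ((m.map (fun v => (X (Sum.inl (f1 v)) : MvPolynomial (W a b) K))).prod)
        * ((m.map (fun v => (X (Sum.inr (Sum.inl (f2 v))) : MvPolynomial (W a b) K))).prod)
        * ((m.map (fun v => (X (Sum.inr (Sum.inr (f3 v))) : MvPolynomial (W a b) K))).prod) := by
    rw [← Multiset.prod_map_mul, ← Multiset.prod_map_mul]
    rfl
  have h3 : ((mW m).map (X : W a b → MvPolynomial (W a b) K)).prod
      = ((m.map (fun v => (X (Sum.inl (f1 v)) : MvPolynomial (W a b) K))).prod)
        * ((m.map (fun v => (X (Sum.inr (Sum.inl (f2 v))) : MvPolynomial (W a b) K))).prod)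
        * ((m.map (fun v => (X (Sum.inr (Sum.inr (f3 v))) : MvPolynomial (W a b) K))).prod) := by
    rw [mW, Multiset.map_add, Multiset.map_add, Multiset.prod_add, Multiset.prod_add,
      Multiset.map_map, Multiset.map_map, Multiset.map_map]
    rfl
  rw [h2, ← h3, prod_map_X]

lemma A_monomial (d : V a b →₀ ℕ) (c : K) :
    aeval (phi K) (monomial d c) = monomial (mW d.toMultiset).toFinsupp c := by
  rw [monomial_eq_P, map_mul, A_P, aeval_C, algebraMap_eq, C_mul_monomial, mul_one]

/-- The retraction, as an additive map on polynomials. -/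
noncomputable def lam : MvPolynomial (W a b) K →+ MvPolynomial (V a b) K :=
  { toFun := AddMonoidAlgebra.mapDomain rho
    map_zero' := AddMonoidAlgebra.mapDomain_zero _
    map_add' := AddMonoidAlgebra.mapDomain_add _ }

lemma lam_monomial (ee : W a b →₀ ℕ) (c : K) :
    lam K (monomial ee c) = monomial (rho ee) c := by
  rw [← single_eq_monomial, ← single_eq_monomial]
  simp only [lam, AddMonoidHom.coe_mk, ZeroHom.coe_mk]
  exact AddMonoidAlgebra.mapDomain_single

end Aeval

end Stmt13Aux

/-- The ideal generated by the `2`-minors of the second and third unfoldings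
equals the toric (Hibi) ideal of the Segre embedding of
`ℙ¹ × ℙ^{a-1} × ℙ^{b-1}`, i.e. the kernel of the monomial map
`x_{sij} ↦ u_s v_i w_j`. -/
theorem stmt_13 (K : Type*) [Field K] (a b : ℕ) (ha : 2 ≤ a) (hab : a ≤ b) :
    Ideal.span (minors2 K a b ∪ minors3 K a b) =
      RingHom.ker (MvPolynomial.aeval
        (fun p : Fin 2 × Fin a × Fin b =>
          (X (Sum.inl p.1) * X (Sum.inr (Sum.inl p.2.1)) * X (Sum.inr (Sum.inr p.2.2)) :
            MvPolynomial (Fin 2 ⊕ Fin a ⊕ Fin b) K)) :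
        MvPolynomial (Fin 2 × Fin a × Fin b) K →ₐ[K] _) := by
  classical
  open Stmt13Aux in
  apply le_antisymm
  · rw [Ideal.span_le]
    rintro x (⟨i₁, i₂, c₁, c₂, rfl⟩ | ⟨j₁, j₂, c₁, c₂, rfl⟩) <;>
      · simp only [SetLike.mem_coe, RingHom.mem_ker, map_sub, map_mul, aeval_X]
        ring
  · intro f hf
    rw [RingHom.mem_ker] at hf
    have hf' : aeval (Stmt13Aux.phi K) f = 0 := hf
    have hAf : aeval (Stmt13Aux.phi K) f
        = ∑ d ∈ f.support, monomial ((Stmt13Aux.mW d.toMultiset).toFinsupp) (coeff d f) := by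
      conv_lhs => rw [MvPolynomial.as_sum f]
      rw [map_sum]
      exact Finset.sum_congr rfl fun d _ => Stmt13Aux.A_monomial K d (coeff d f)
    have hg : Stmt13Aux.lam K (aeval (Stmt13Aux.phi K) f)
        = ∑ d ∈ f.support, monomial ((Stmt13Aux.canon d.toMultiset).toFinsupp) (coeff d f) := by
      rw [hAf, map_sum]
      refine Finset.sum_congr rfl fun d _ => ?_
      rw [Stmt13Aux.lam_monomial, Stmt13Aux.rho_spec]
    have hg0 : (∑ d ∈ f.support,
        monomial ((Stmt13Aux.canon d.toMultiset).toFinsupp) (coeff d f)) = 0 := by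
      rw [← hg, hf', map_zero]
    have hfd : f = ∑ d ∈ f.support,
        (monomial d (coeff d f)
          - monomial ((Stmt13Aux.canon d.toMultiset).toFinsupp) (coeff d f)) := by
      rw [Finset.sum_sub_distrib, hg0, sub_zero, ← MvPolynomial.as_sum]
    rw [hfd]
    refine Submodule.sum_mem _ fun d _ => ?_
    have h2 : monomial ((Stmt13Aux.canon d.toMultiset).toFinsupp) (coeff d f)
        = C (coeff d f) * Stmt13Aux.P K (Stmt13Aux.canon d.toMultiset) := by
      rw [Stmt13Aux.monomial_eq_P, Multiset.toFinsupp_toMultiset]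
    rw [Stmt13Aux.monomial_eq_P, h2, ← mul_sub]
    exact Ideal.mul_mem_left _ _ (Stmt13Aux.rel_canon d.toMultiset)
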